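/- A domain Ω ⊆ ℝⁿ with nonempty boundary admits a convex function u : Ω → ℝ with gradient unbounded near ∂Ω if and only if Ω is convex. -/

import Mathlib

open Metric Set Filter Topology MeasureTheory

lemma chord_fderiv_le {E : Type*} [NormedAddCommGroup E] [NormedSpace ℝ E] {Ω : Set E}
    (hΩopen : IsOpen Ω) {u : E → ℝ}
    (H : ∀ x ∈ Ω, ∀ y ∈ Ω, ∀ τ : ℝ, τ ∈ Ioo (0:ℝ) 1 →
        τ • x + (1 - τ) • y ∈ Ω →
        u (τ • x + (1 - τ) • y) ≤ τ * u x + (1 - τ) * u y)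
    {y : E} (hy : y ∈ Ω) (hd : DifferentiableAt ℝ u y) {q : E} (hq : q ∈ Ω) :
    fderiv ℝ u y (q - y) ≤ u q - u y := by
  set L := fderiv ℝ u y with hL
  set c : ℝ → E := fun σ => y + σ • (q - y) with hc
  have hc0 : c 0 = y := by simp [hc]
  have hccont : Continuous c := by fun_prop
  have hcd : HasDerivAt c (q - y) 0 := by
    have h1 : HasDerivAt (fun σ : ℝ => σ • (q - y)) ((1:ℝ) • (q - y)) 0 :=
      (hasDerivAt_id 0).smul_const (q - y)
    have h2 := h1.const_add y; rw [one_smul] at h2; exact h2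
  have hder : HasDerivAt (u ∘ c) (L (q - y)) 0 := by
    refine HasFDerivAt.comp_hasDerivAt _ ?_ hcd
    rw [hc0]
    exact hd.hasFDerivAt
  have hslope : Tendsto (slope (u ∘ c) 0) (𝓝[>] 0) (𝓝 (L (q - y))) :=
    (hasDerivAt_iff_tendsto_slope.mp hder).mono_left
      (nhdsWithin_mono 0 fun x hx => ne_of_gt hx)
  have hev : ∀ᶠ σ in 𝓝[>] (0:ℝ), slope (u ∘ c) 0 σ ≤ u q - u y := by
    have hmem : ∀ᶠ σ in 𝓝 (0:ℝ), c σ ∈ Ω :=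
      hccont.continuousAt (hΩopen.mem_nhds (by rwa [hc0]))
    have h1 : ∀ᶠ σ in 𝓝[>] (0:ℝ), c σ ∈ Ω := hmem.filter_mono nhdsWithin_le_nhds
    have h2 : ∀ᶠ σ in 𝓝[>] (0:ℝ), σ ∈ Ioo (0:ℝ) 1 :=
      Ioo_mem_nhdsGT_of_mem ⟨le_refl 0, one_pos⟩
    filter_upwards [h1, h2] with σ hσΩ hσI
    have hceq : c σ = σ • q + (1 - σ) • y := by
      simp only [hc]; module
    have hcomb : σ • q + (1 - σ) • y ∈ Ω := by rwa [hceq] at hσΩ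
    have hH := H q hq y hy σ hσI hcomb
    simp only [Function.comp_def]
    rw [slope_def_field, hc0, hceq, sub_zero,
      div_le_iff₀ hσI.1]
    linarith
  exact le_of_tendsto hslope hev

lemma convexOn_of_chord {E : Type*} [NormedAddCommGroup E] [NormedSpace ℝ E] {Ω : Set E}
    {u : E → ℝ}
    (H : ∀ x ∈ Ω, ∀ y ∈ Ω, ∀ τ : ℝ, τ ∈ Ioo (0:ℝ) 1 →
        τ • x + (1 - τ) • y ∈ Ω →
        u (τ • x + (1 - τ) • y) ≤ τ * u x + (1 - τ) * u y)
    {s : Set E} (hsΩ : s ⊆ Ω) (hs : Convex ℝ s) : ConvexOn ℝ s u := by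
  refine ⟨hs, fun x hx y hy a b ha hb hab => ?_⟩
  rcases eq_or_lt_of_le ha with rfl | ha'
  · simp only [zero_smul, zero_add, zero_mul] at *
    rw [show b = 1 by linarith]; simp
  rcases eq_or_lt_of_le hb with rfl | hb'
  · simp only [zero_smul, add_zero, zero_mul] at *
    rw [show a = 1 by linarith]; simp
  have hb1 : b = 1 - a := by linarith
  subst hb1
  exact H x (hsΩ hx) y (hsΩ hy) a ⟨ha', by linarith⟩
    (hsΩ (hs hx hy ha hb hab))

lemma sqrt_comb {a b τ : ℝ} (ha : 0 ≤ a) (hb : 0 ≤ b) (hτ : 0 ≤ τ) (hτ' : τ ≤ 1) :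
    τ * Real.sqrt a + (1 - τ) * Real.sqrt b ≤ Real.sqrt (τ * a + (1 - τ) * b) := by
  have h1 : 0 ≤ τ * Real.sqrt a + (1 - τ) * Real.sqrt b := by
    have := Real.sqrt_nonneg a; have := Real.sqrt_nonneg b; nlinarith
  have h2 : 0 ≤ τ * a + (1 - τ) * b := by nlinarith
  rw [Real.le_sqrt h1 h2]
  nlinarith [Real.sq_sqrt ha, Real.sq_sqrt hb, sq_nonneg (Real.sqrt a - Real.sqrt b),
    mul_nonneg hτ (by linarith : (0:ℝ) ≤ 1 - τ), Real.sqrt_nonneg a, Real.sqrt_nonneg b]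

lemma infDist_concave_comb {E : Type*} [NormedAddCommGroup E] [NormedSpace ℝ E]
    {Ω : Set E} (hΩopen : IsOpen Ω) (hconv : Convex ℝ Ω) (hne : Ωᶜ.Nonempty)
    {x y : E} (hx : x ∈ Ω) (hy : y ∈ Ω) {τ : ℝ} (hτ : τ ∈ Set.Ioo (0:ℝ) 1) :
    τ * infDist x Ωᶜ + (1 - τ) * infDist y Ωᶜ ≤ infDist (τ • x + (1 - τ) • y) Ωᶜ := by
  set dx := infDist x Ωᶜ with hdx
  set dy := infDist y Ωᶜ with hdy
  have hclosed : IsClosed Ωᶜ := hΩopen.isClosed_compl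
  have hdxpos : 0 < dx := (hclosed.notMem_iff_infDist_pos hne).mp (by simpa using hx)
  have hdypos : 0 < dy := (hclosed.notMem_iff_infDist_pos hne).mp (by simpa using hy)
  set s := τ * dx + (1 - τ) * dy with hs
  have hspos : 0 < s := by nlinarith [hτ.1, hτ.2]
  by_contra hlt
  push_neg at hlt
  obtain ⟨z, hzc, hzd⟩ := (infDist_lt_iff hne).mp hlt
  -- z ∈ Ωᶜ with dist m z < s; derive z ∈ Ω
  set m := τ • x + (1 - τ) • y with hm
  have hx' : x + (dx / s) • (z - m) ∈ Ω := by
    have hd : dist x (x + (dx / s) • (z - m)) < dx := by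
      rw [dist_eq_norm]
      have : x - (x + (dx / s) • (z - m)) = -((dx / s) • (z - m)) := by abel
      rw [this, norm_neg, norm_smul, Real.norm_eq_abs, abs_of_pos (by positivity)]
      rw [show ‖z - m‖ = dist z m from (dist_eq_norm _ _).symm, dist_comm]
      calc dx / s * dist m z < dx / s * s := by
            exact mul_lt_mul_of_pos_left hzd (by positivity)
      _ = dx := by field_simp
    by_contra hmem
    exact absurd (infDist_le_dist_of_mem (by simpa using hmem)) (not_le.mpr hd)
  have hy' : y + (dy / s) • (z - m) ∈ Ω := by
    have hd : dist y (y + (dy / s) • (z - m)) < dy := by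
      rw [dist_eq_norm]
      have : y - (y + (dy / s) • (z - m)) = -((dy / s) • (z - m)) := by abel
      rw [this, norm_neg, norm_smul, Real.norm_eq_abs, abs_of_pos (by positivity)]
      rw [show ‖z - m‖ = dist z m from (dist_eq_norm _ _).symm, dist_comm]
      calc dy / s * dist m z < dy / s * s := by
            exact mul_lt_mul_of_pos_left hzd (by positivity)
      _ = dy := by field_simp
    by_contra hmem
    exact absurd (infDist_le_dist_of_mem (by simpa using hmem)) (not_le.mpr hd)
  have hzΩ : z ∈ Ω := by
    have hcomb := hconv hx' hy' hτ.1.le (by linarith [hτ.2] : (0:ℝ) ≤ 1 - τ) (by ring)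
    have : τ • (x + (dx / s) • (z - m)) + (1 - τ) • (y + (dy / s) • (z - m)) = z := by
      have hcoef : τ * (dx / s) + (1 - τ) * (dy / s) = 1 := by
        rw [hs]; field_simp; exact div_self (by rw [← hs]; exact hspos.ne')
      match_scalars <;> (field_simp; try ring)
    rwa [this] at hcomb
  exact hzc hzΩ

lemma one_le_norm_fderiv_infDist {E : Type*} [NormedAddCommGroup E] [NormedSpace ℝ E]
    [ProperSpace E]
    {Ω : Set E} (hΩopen : IsOpen Ω) (hne : Ωᶜ.Nonempty)
    {y : E} (hy : y ∈ Ω) (hd : DifferentiableAt ℝ (fun w => infDist w Ωᶜ) y) :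
    1 ≤ ‖fderiv ℝ (fun w => infDist w Ωᶜ) y‖ := by
  set d : E → ℝ := fun w => infDist w Ωᶜ with hdfun
  set L := fderiv ℝ d y with hL
  have hclosed : IsClosed Ωᶜ := hΩopen.isClosed_compl
  have hdypos : 0 < d y := (hclosed.notMem_iff_infDist_pos hne).mp (by simpa using hy)
  obtain ⟨z, hzc, hzd⟩ := hclosed.exists_infDist_eq_dist hne y
  have hzy : ‖z - y‖ = d y := by
    rw [hdfun]; simp only; rw [hzd, dist_eq_norm, ← norm_neg]; congr 1; abel
  have hzyne : z ≠ y := by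
    intro h
    rw [h] at hzy
    simp at hzy
    exact absurd hzy.symm (ne_of_gt hdypos)
  -- values of d along the segment
  have hseg : ∀ t : ℝ, 0 ≤ t → t ≤ 1 → d (y + t • (z - y)) = (1 - t) * d y := by
    intro t ht0 ht1
    have hub : d (y + t • (z - y)) ≤ (1 - t) * d y := by
      have h1 : dist (y + t • (z - y)) z = (1 - t) * d y := by
        rw [dist_eq_norm]
        have : y + t • (z - y) - z = -((1 - t) • (z - y)) := by module
        rw [this, norm_neg, norm_smul, Real.norm_eq_abs, abs_of_nonneg (by linarith), hzy]
      rw [← h1]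
      exact infDist_le_dist_of_mem hzc
    have hlb : (1 - t) * d y ≤ d (y + t • (z - y)) := by
      have h2 : d y ≤ d (y + t • (z - y)) + dist y (y + t • (z - y)) :=
        infDist_le_infDist_add_dist
      have h3 : dist y (y + t • (z - y)) = t * d y := by
        rw [dist_eq_norm]
        have : y - (y + t • (z - y)) = -(t • (z - y)) := by abel
        rw [this, norm_neg, norm_smul, Real.norm_eq_abs, abs_of_nonneg ht0, hzy]
      rw [h3] at h2; linarith
    linarith
  -- derivative along segment
  set c : ℝ → E := fun t => y + t • (z - y) with hc
  have hc0 : c 0 = y := by simp [hc]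
  have hcd : HasDerivAt c (z - y) 0 := by
    have h1 : HasDerivAt (fun σ : ℝ => σ • (z - y)) ((1:ℝ) • (z - y)) 0 :=
      (hasDerivAt_id 0).smul_const (z - y)
    have h2 := h1.const_add y; rw [one_smul] at h2; exact h2
  have hder : HasDerivAt (d ∘ c) (L (z - y)) 0 := by
    refine HasFDerivAt.comp_hasDerivAt _ ?_ hcd
    rw [hc0]
    exact hd.hasFDerivAt
  have hslope : Tendsto (slope (d ∘ c) 0) (𝓝[>] 0) (𝓝 (L (z - y))) :=
    (hasDerivAt_iff_tendsto_slope.mp hder).mono_left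
      (nhdsWithin_mono 0 fun x hx => ne_of_gt hx)
  have hconst : Tendsto (slope (d ∘ c) 0) (𝓝[>] (0:ℝ)) (𝓝 (-(d y))) := by
    refine Tendsto.congr' ?_ tendsto_const_nhds
    filter_upwards [Ioo_mem_nhdsGT_of_mem (⟨le_refl (0:ℝ), one_pos⟩ : (0:ℝ) ∈ Ico 0 1)]
      with t ht
    simp only [Function.comp_def, slope_def_field, hc0]
    rw [show (d (c t)) = (1 - t) * d y from hseg t ht.1.le ht.2.le]
    rw [eq_div_iff (by simpa using ne_of_gt ht.1 : t - 0 ≠ 0)]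
    ring
  have hLzy : L (z - y) = -(d y) := tendsto_nhds_unique hslope hconst
  have hnorm : d y ≤ ‖L‖ * d y := by
    calc d y = |L (z - y)| := by rw [hLzy, abs_neg, abs_of_pos hdypos]
    _ = ‖L (z - y)‖ := (Real.norm_eq_abs _).symm
    _ ≤ ‖L‖ * ‖z - y‖ := L.le_opNorm _
    _ = ‖L‖ * d y := by rw [hzy]
  nlinarith [hdypos]

set_option maxHeartbeats 1000000 in
lemma forward_convex {E : Type*} [NormedAddCommGroup E] [NormedSpace ℝ E]
    [FiniteDimensional ℝ E]
    {Ω : Set E} (hΩopen : IsOpen Ω) {u : E → ℝ}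
    (H : ∀ x ∈ Ω, ∀ y ∈ Ω, ∀ τ : ℝ, τ ∈ Ioo (0:ℝ) 1 →
        τ • x + (1 - τ) • y ∈ Ω →
        u (τ • x + (1 - τ) • y) ≤ τ * u x + (1 - τ) * u y)
    (Hblow : ∀ x ∈ frontier Ω, ∀ δ > (0:ℝ), ∀ C : ℝ,
        ∃ y ∈ ball x δ ∩ Ω, DifferentiableAt ℝ u y ∧ C < ‖fderiv ℝ u y‖) :
    Convex ℝ Ω := by
  rw [convex_iff_forall_pos]
  intro p hp q hq α β hα hβ hαβ
  by_contra hnot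
  set γ : ℝ → E := fun t => p + t • (q - p) with hγ
  have hγcont : Continuous γ := by fun_prop
  have hγ0 : γ 0 = p := by simp [hγ]
  have hγβ : γ β = α • p + β • q := by
    simp only [hγ]; rw [show α = 1 - β by linarith]; module
  set S : Set ℝ := {t | t ∈ Icc (0:ℝ) 1 ∧ γ t ∉ Ω} with hS
  have hβS : β ∈ S := ⟨⟨hβ.le, by linarith⟩, by rwa [hγβ]⟩
  have hSne : S.Nonempty := ⟨β, hβS⟩
  have hSbdd : BddBelow S := ⟨0, fun s hs => hs.1.1⟩
  set t₁ := sInf S with ht₁def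
  have ht₁β : t₁ ≤ β := csInf_le hSbdd hβS
  have ht₁1 : t₁ < 1 := lt_of_le_of_lt ht₁β (by linarith)
  have hbefore : ∀ t, 0 ≤ t → t < t₁ → γ t ∈ Ω := by
    intro t ht0 htlt
    by_contra h
    exact absurd (csInf_le hSbdd ⟨⟨ht0, by linarith⟩, h⟩) (not_le.mpr htlt)
  have ht₁pos : 0 < t₁ := by
    have hev : ∀ᶠ t in 𝓝 (0:ℝ), γ t ∈ Ω :=
      hγcont.continuousAt (hΩopen.mem_nhds (by rwa [hγ0]))
    rcases Metric.eventually_nhds_iff.mp hev with ⟨ε, hε, hball⟩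
    refine lt_of_lt_of_le hε (le_csInf hSne fun s hs => ?_)
    by_contra hlt
    push_neg at hlt
    exact hs.2 (hball (by rw [Real.dist_eq, sub_zero, abs_of_nonneg hs.1.1]; exact hlt))
  set x₁ := γ t₁ with hx₁
  have hx₁not : x₁ ∉ Ω := by
    intro hmem
    have hev : ∀ᶠ t in 𝓝 t₁, γ t ∈ Ω := hγcont.continuousAt (hΩopen.mem_nhds hmem)
    rcases Metric.eventually_nhds_iff.mp hev with ⟨ε, hε, hball⟩
    have hlb : ∀ s ∈ S, t₁ + ε ≤ s := by
      intro s hs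
      by_contra hlt
      push_neg at hlt
      have hts : t₁ ≤ s := csInf_le hSbdd hs
      exact hs.2 (hball (by rw [Real.dist_eq, abs_of_nonneg (by linarith)]; linarith))
    have := le_csInf hSne hlb
    linarith
  have hx₁fr : x₁ ∈ frontier Ω := by
    rw [hΩopen.frontier_eq]
    refine ⟨?_, hx₁not⟩
    refine mem_closure_of_tendsto
      ((hγcont.continuousAt.tendsto).mono_left (nhdsWithin_le_nhds (s := Iio t₁))) ?_
    filter_upwards [Ioo_mem_nhdsLT_of_mem (⟨ht₁pos, le_refl t₁⟩ : t₁ ∈ Ioc 0 t₁)] with t ht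
    exact hbefore t ht.1.le ht.2
  -- radii
  rcases Metric.isOpen_iff.mp hΩopen p hp with ⟨εp, hεp, hballp⟩
  rcases Metric.isOpen_iff.mp hΩopen q hq with ⟨εq, hεq, hballq⟩
  set r := min εp εq / 5 with hr
  have hrpos : 0 < r := by positivity
  have hrp : 4 * r < εp := by
    have : min εp εq ≤ εp := min_le_left _ _
    have : 0 < min εp εq := lt_min hεp hεq
    rw [hr]; linarith
  have hrq : 4 * r < εq := by
    have : min εp εq ≤ εq := min_le_right _ _
    have : 0 < min εp εq := lt_min hεp hεq
    rw [hr]; linarith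
  have h2rp : closedBall p (2*r) ⊆ Ω := fun v hv => hballp (by
    rw [mem_closedBall] at hv; rw [mem_ball]; linarith)
  have h2rq : closedBall q (2*r) ⊆ Ω := fun v hv => hballq (by
    rw [mem_closedBall] at hv; rw [mem_ball]; linarith)
  have hballpΩ : ball p (4*r) ⊆ Ω := fun v hv => hballp (by
    rw [mem_ball] at hv ⊢; linarith)
  have hballqΩ : ball q (4*r) ⊆ Ω := fun v hv => hballq (by
    rw [mem_ball] at hv ⊢; linarith)
  -- bounds for u near p and q
  obtain ⟨Ka, hKa⟩ := (isCompact_closedBall p (2*r)).exists_bound_of_continuousOn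
      (((convexOn_of_chord H hballpΩ (convex_ball _ _)).continuousOn isOpen_ball).mono
        (closedBall_subset_ball (by linarith)))
  obtain ⟨Kb, hKb⟩ := (isCompact_closedBall q (2*r)).exists_bound_of_continuousOn
      (((convexOn_of_chord H hballqΩ (convex_ball _ _)).continuousOn isOpen_ball).mono
        (closedBall_subset_ball (by linarith)))
  set K := max Ka Kb with hK
  have hK0 : 0 ≤ K := by
    have := hKa p (mem_closedBall_self (by positivity))
    have : (0:ℝ) ≤ Ka := le_trans (norm_nonneg _) this
    exact le_trans this (le_max_left _ _)
  have hKp : ∀ v ∈ closedBall p (2*r), |u v| ≤ K := fun v hv =>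
    le_trans (hKa v hv) (le_max_left _ _)
  have hKq : ∀ v ∈ closedBall q (2*r), |u v| ≤ K := fun v hv =>
    le_trans (hKb v hv) (le_max_right _ _)
  -- constants
  set ℓ := dist p x₁ with hℓ
  have hℓpos : 0 < ℓ := dist_pos.mpr (fun h => hx₁not (h ▸ hp))
  set μ := r / ℓ with hμ
  have hμpos : 0 < μ := by positivity
  set K₂ := (2 + μ) / μ * K with hK₂
  have hK₂0 : 0 ≤ K₂ := by positivity
  set M := K + K₂ with hM
  have hM0 : 0 ≤ M := by positivity
  -- blow-up gives contradiction
  obtain ⟨y, ⟨hyball, hyΩ⟩, hdiff, hbig⟩ := Hblow x₁ hx₁fr r hrpos (M / r)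
  set L := fderiv ℝ u y with hLdef
  have hyx₁ : ‖y - x₁‖ < r := by rw [← dist_eq_norm]; exact hyball
  clear_value t₁ x₁ r K ℓ μ K₂ M L
  -- lower bound on u y
  have hlow : -K₂ ≤ u y := by
    set a' := p + (y - x₁) with ha'
    have ha'ball : a' ∈ closedBall p (2*r) := by
      rw [mem_closedBall, dist_eq_norm]
      have : a' - p = y - x₁ := by rw [ha']; abel
      rw [this]; linarith
    set q2 := a' + μ • (p - x₁) with hq2
    have hq2ball : q2 ∈ closedBall p (2*r) := by
      rw [mem_closedBall, dist_eq_norm]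
      have h1 : q2 - p = (y - x₁) + μ • (p - x₁) := by rw [hq2, ha']; abel
      rw [h1]
      have h2 : ‖μ • (p - x₁)‖ = r := by
        rw [norm_smul, Real.norm_eq_abs, abs_of_pos hμpos, hμ, ← dist_eq_norm, ← hℓ]
        field_simp
      calc ‖(y - x₁) + μ • (p - x₁)‖ ≤ ‖y - x₁‖ + ‖μ • (p - x₁)‖ := norm_add_le _ _
      _ ≤ 2 * r := by rw [h2]; linarith
    set τ := 1 / (1 + μ) with hτ
    have hτI : τ ∈ Ioo (0:ℝ) 1 := by
      constructor
      · positivity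
      · rw [hτ, div_lt_one (by linarith)]; linarith
    have hcomb : τ • q2 + (1 - τ) • y = a' := by
      rw [hq2, ha', hτ]
      match_scalars <;> (field_simp; try ring)
    have ha'Ω : a' ∈ Ω := h2rp ha'ball
    have hq2Ω : q2 ∈ Ω := h2rp hq2ball
    have hH2 := H q2 hq2Ω y hyΩ τ hτI (by rwa [hcomb])
    rw [hcomb] at hH2
    have h1 : -K ≤ u a' := neg_le_of_abs_le (hKp a' ha'ball)
    have h2 : u q2 ≤ K := le_of_abs_le (hKp q2 hq2ball)
    clear_value a' q2 τ
    have hτ1 : 0 < 1 - τ := by linarith [hτI.2]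
    have hq2K : τ * u q2 ≤ τ * K := mul_le_mul_of_nonneg_left h2 hτI.1.le
    have e1 : -K - τ * K ≤ (1 - τ) * u y := by linarith
    have e2 : -K₂ * (1 - τ) = -K - τ * K := by
      rw [hK₂, hτ]; field_simp; ring
    refine le_of_mul_le_mul_right ?_ hτ1
    calc -K₂ * (1 - τ) = -K - τ * K := e2
    _ ≤ (1 - τ) * u y := e1
    _ = u y * (1 - τ) := mul_comm _ _
  -- key directional bound
  have hkey : ∀ z : E, ‖z‖ ≤ r → L z ≤ M := by
    intro z hz
    set w := z + (y - x₁) with hw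
    have hwn : ‖w‖ ≤ 2*r :=
      calc ‖w‖ ≤ ‖z‖ + ‖y - x₁‖ := norm_add_le _ _
      _ ≤ 2*r := by linarith
    have hv1 : p + w ∈ closedBall p (2*r) := by
      rw [mem_closedBall, dist_eq_norm]; simpa using hwn
    have hv2 : q + w ∈ closedBall q (2*r) := by
      rw [mem_closedBall, dist_eq_norm]; simpa using hwn
    have hs1 : L (p + w - y) ≤ u (p + w) - u y := by
      rw [hLdef]; exact chord_fderiv_le hΩopen H hyΩ hdiff (h2rp hv1)
    have hs2 : L (q + w - y) ≤ u (q + w) - u y := by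
      rw [hLdef]; exact chord_fderiv_le hΩopen H hyΩ hdiff (h2rq hv2)
    have hb1 : u (p + w) - u y ≤ M := by
      have := le_of_abs_le (hKp _ hv1)
      rw [hM]; linarith
    have hb2 : u (q + w) - u y ≤ M := by
      have := le_of_abs_le (hKq _ hv2)
      rw [hM]; linarith
    have hzdecomp : z = (1 - t₁) • (p + w - y) + t₁ • (q + w - y) := by
      rw [hw, hx₁]
      simp only [hγ]
      module
    have hLz : L z = (1 - t₁) * (L (p + w - y)) + t₁ * (L (q + w - y)) := by
      conv_lhs => rw [hzdecomp]
      rw [map_add, _root_.map_smul, _root_.map_smul]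
      simp
    rw [hLz]
    have h1t : 0 ≤ 1 - t₁ := by linarith
    nlinarith [mul_le_mul_of_nonneg_left hs1 h1t, mul_le_mul_of_nonneg_left hs2 ht₁pos.le,
      mul_le_mul_of_nonneg_left hb1 h1t, mul_le_mul_of_nonneg_left hb2 ht₁pos.le]
  -- operator norm bound
  have hnorm : ‖L‖ ≤ M / r := by
    refine ContinuousLinearMap.opNorm_le_bound _ (by positivity) fun z => ?_
    rcases eq_or_ne z 0 with rfl | hz0
    · simp
    have hzpos : 0 < ‖z‖ := norm_pos_iff.mpr hz0
    set z' := (r / ‖z‖) • z with hz'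
    have hz'n : ‖z'‖ ≤ r := by
      rw [hz', norm_smul, Real.norm_eq_abs, abs_of_pos (by positivity)]
      rw [div_mul_eq_mul_div, mul_div_assoc, div_self (ne_of_gt hzpos), mul_one]
    have h1 : L z' ≤ M := hkey z' hz'n
    have h2 : L (-z') ≤ M := hkey (-z') (by rwa [norm_neg])
    rw [map_neg] at h2
    have habs : |L z'| ≤ M := abs_le.mpr ⟨by linarith, h1⟩
    have h3 : L z' = (r / ‖z‖) * L z := by rw [hz', _root_.map_smul]; simp
    rw [h3, abs_mul, abs_of_pos (by positivity : (0:ℝ) < r / ‖z‖)] at habs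
    rw [Real.norm_eq_abs, div_mul_eq_mul_div, le_div_iff₀ hrpos]
    calc |L z| * r = r / ‖z‖ * |L z| * ‖z‖ := by field_simp
    _ ≤ M * ‖z‖ := mul_le_mul_of_nonneg_right habs (norm_nonneg z)
  linarith

lemma backward_witness {n : ℕ} {Ω : Set (EuclideanSpace ℝ (Fin n))} (hΩopen : IsOpen Ω)
    (hfr : (frontier Ω).Nonempty) (hconv : Convex ℝ Ω) :
    ∃ u : EuclideanSpace ℝ (Fin n) → ℝ,
      (∀ x ∈ Ω, ∀ y ∈ Ω, ∀ τ : ℝ, τ ∈ Ioo (0:ℝ) 1 →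
        τ • x + (1 - τ) • y ∈ Ω →
        u (τ • x + (1 - τ) • y) ≤ τ * u x + (1 - τ) * u y) ∧
      ∀ x ∈ frontier Ω, ∀ δ > (0:ℝ), ∀ C : ℝ,
        ∃ y ∈ ball x δ ∩ Ω, DifferentiableAt ℝ u y ∧ C < ‖fderiv ℝ u y‖ := by
  have hne : Ωᶜ.Nonempty := by
    obtain ⟨x, hx⟩ := hfr
    rw [hΩopen.frontier_eq] at hx
    exact ⟨x, hx.2⟩
  have hclosed : IsClosed Ωᶜ := hΩopen.isClosed_compl
  set d : EuclideanSpace ℝ (Fin n) → ℝ := fun w => infDist w Ωᶜ with hdfun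
  refine ⟨fun w => -Real.sqrt (d w), ?_, ?_⟩
  · intro x hx y hy τ hτ _
    have hcomb := infDist_concave_comb hΩopen hconv hne hx hy hτ
    have hsq := sqrt_comb (infDist_nonneg) (infDist_nonneg) hτ.1.le hτ.2.le
      (a := infDist x Ωᶜ) (b := infDist y Ωᶜ)
    have h1 : Real.sqrt (τ * infDist x Ωᶜ + (1 - τ) * infDist y Ωᶜ) ≤
        Real.sqrt (d (τ • x + (1 - τ) • y)) := Real.sqrt_le_sqrt hcomb
    show -Real.sqrt (d (τ • x + (1 - τ) • y)) ≤
      τ * -Real.sqrt (d x) + (1 - τ) * -Real.sqrt (d y)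
    have : τ * -Real.sqrt (d x) + (1 - τ) * -Real.sqrt (d y) =
        -(τ * Real.sqrt (infDist x Ωᶜ) + (1 - τ) * Real.sqrt (infDist y Ωᶜ)) := by
      simp [hdfun]; ring
    rw [this]
    linarith
  · intro x hxfr δ hδ C
    have hxfr' := hxfr
    rw [hΩopen.frontier_eq] at hxfr'
    have hxc : x ∈ Ωᶜ := hxfr'.2
    have hxcl : x ∈ closure Ω := hxfr'.1
    set C' := max C 1 with hC'
    have hC'pos : 0 < C' := lt_of_lt_of_le one_pos (le_max_right _ _)
    set ε := min (δ/2) (1/(6*C'^2)) with hε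
    have hεpos : 0 < ε := by positivity
    obtain ⟨p, hpΩ, hpx⟩ := Metric.mem_closure_iff.mp hxcl ε hεpos
    have hdp_pos : 0 < d p := (hclosed.notMem_iff_infDist_pos hne).mp (by simpa using hpΩ)
    have hdp_lt : d p < ε := lt_of_le_of_lt (infDist_le_dist_of_mem hxc) (by rwa [dist_comm])
    set ρ := d p / 2 with hρ
    have hρpos : 0 < ρ := by positivity
    have hlip : LipschitzWith 1 d := lipschitz_infDist_pt Ωᶜ
    obtain ⟨y, hyball, hydiff⟩ : ∃ y ∈ ball p ρ, DifferentiableAt ℝ d y := by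
      by_contra h
      push_neg at h
      have hsub : ball p ρ ⊆ {w | ¬ DifferentiableAt ℝ d w} := fun w hw => h w hw
      have h0 : volume (ball p ρ) = 0 :=
        measure_mono_null hsub (ae_iff.mp (hlip.ae_differentiableAt (μ := volume)))
      exact absurd h0 (ne_of_gt (measure_ball_pos _ _ hρpos))
    have hyp : dist y p < ρ := mem_ball.mp hyball
    have hyΩ : y ∈ Ω := by
      have hlt : dist p y < d p := by
        rw [dist_comm]; calc dist y p < ρ := hyp
        _ < d p := by linarith
      by_contra h
      exact absurd (infDist_le_dist_of_mem (by simpa using h)) (not_le.mpr hlt)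
    have hdy_pos : 0 < d y := (hclosed.notMem_iff_infDist_pos hne).mp (by simpa using hyΩ)
    have hεC : ε ≤ 1/(6*C'^2) := min_le_right _ _
    have hdy_lt : d y < 1/(4*C'^2) := by
      have h1 : d y ≤ d p + dist y p := infDist_le_infDist_add_dist
      have h2 : d y < (3/2) * d p := by rw [hρ] at hyp; linarith
      have h3 : (3/2) * d p < (3/2) * (1/(6*C'^2)) := by
        have := lt_of_lt_of_le hdp_lt hεC
        linarith
      calc d y < (3/2) * (1/(6*C'^2)) := lt_trans h2 h3
      _ = 1/(4*C'^2) := by ring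
    set Ld := fderiv ℝ d y with hLd
    have hLd1 : 1 ≤ ‖Ld‖ := one_le_norm_fderiv_infDist hΩopen hne hyΩ hydiff
    have hsqrt : HasDerivAt Real.sqrt (1 / (2 * Real.sqrt (d y))) (d y) :=
      Real.hasDerivAt_sqrt (ne_of_gt hdy_pos)
    have hcomp : HasFDerivAt (fun w => Real.sqrt (d w))
        ((1 / (2 * Real.sqrt (d y))) • Ld) y :=
      hsqrt.comp_hasFDerivAt y hydiff.hasFDerivAt
    have hneg : HasFDerivAt (fun w => -Real.sqrt (d w))
        (-((1 / (2 * Real.sqrt (d y))) • Ld)) y := hcomp.neg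
    refine ⟨y, ⟨?_, hyΩ⟩, hneg.differentiableAt, ?_⟩
    · rw [mem_ball]
      have hεδ : ε ≤ δ/2 := min_le_left _ _
      calc dist y x ≤ dist y p + dist p x := dist_triangle _ _ _
      _ < ρ + ε := by rw [dist_comm p x]; exact add_lt_add hyp hpx
      _ ≤ ε/2 + ε := by
          have : ρ < ε/2 := by rw [hρ]; linarith
          linarith
      _ < δ := by linarith
    · rw [hneg.fderiv, norm_neg, norm_smul]
      have hsq_pos : 0 < Real.sqrt (d y) := Real.sqrt_pos.mpr hdy_pos
      have h5 : Real.sqrt (d y) < 1/(2*C') := by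
        rw [show (1/(2*C')) = Real.sqrt ((1/(2*C'))^2) from
          (Real.sqrt_sq (by positivity)).symm]
        apply Real.sqrt_lt_sqrt hdy_pos.le
        calc d y < 1/(4*C'^2) := hdy_lt
        _ = (1/(2*C'))^2 := by ring
      have h6 : C' < 1 / (2 * Real.sqrt (d y)) := by
        have h5' : C' * Real.sqrt (d y) < 1/2 := by
          have := mul_lt_mul_of_pos_left h5 hC'pos
          rwa [show C' * (1/(2*C')) = 1/2 by field_simp] at this
        rw [lt_div_iff₀ (by positivity)]
        linarith
      have h7 : ‖(1 / (2 * Real.sqrt (d y)) : ℝ)‖ = 1 / (2 * Real.sqrt (d y)) := by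
        rw [Real.norm_eq_abs, abs_of_pos (by positivity)]
      rw [h7]
      have h8 : 1 / (2 * Real.sqrt (d y)) * 1 ≤ 1 / (2 * Real.sqrt (d y)) * ‖Ld‖ :=
        mul_le_mul_of_nonneg_left hLd1 (by positivity)
      have h9 : C ≤ C' := le_max_left _ _
      nlinarith


open Metric Set

/-- A domain with nonempty boundary admits a convex function with gradient
unbounded near the boundary iff it is convex. -/
theorem stmt_10 {n : ℕ} (Ω : Set (EuclideanSpace ℝ (Fin n)))
    (hΩopen : IsOpen Ω) (hΩconn : IsPreconnected Ω) (hΩne : Ω.Nonempty)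
    (hfr : (frontier Ω).Nonempty) :
    (∃ u : EuclideanSpace ℝ (Fin n) → ℝ,
      (∀ x ∈ Ω, ∀ y ∈ Ω, ∀ τ : ℝ, τ ∈ Ioo (0:ℝ) 1 →
        τ • x + (1 - τ) • y ∈ Ω →
        u (τ • x + (1 - τ) • y) ≤ τ * u x + (1 - τ) * u y) ∧
      ∀ x ∈ frontier Ω, ∀ δ > (0:ℝ), ∀ C : ℝ,
        ∃ y ∈ ball x δ ∩ Ω, DifferentiableAt ℝ u y ∧ C < ‖fderiv ℝ u y‖) ↔
    Convex ℝ Ω := by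
  constructor
  · rintro ⟨u, H, Hblow⟩
    exact forward_convex hΩopen H Hblow
  · intro hconv
    exact backward_witness hΩopen hfr hconv
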